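/- For every ε with 0 < ε < 1, every arithmetic progression contained in the middle-ε Cantor set M_ε has length at most 1/ε + 1; that is, if a ∈ ℝ, t > 0, k ≥ 2 is an integer, and a + i·t ∈ M_ε for all integers 0 ≤ i < k, then k − 1 ≤ 1/ε. -/

import Mathlib

/-- The middle-`ε` Cantor set. -/
noncomputable def middleCantor (ε : ℝ) : Set ℝ :=
  {x | ∃ b : ℕ → Bool,
    x = (1 - (1 - ε) / 2) * ∑' n : ℕ, (if b n then ((1 - ε) / 2) ^ n else 0)}

section aux

private lemma mc_summable {ε : ℝ} (hε0 : 0 < ε) (hε1 : ε < 1) (b : ℕ → Bool) :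
    Summable (fun n : ℕ => (if b n then ((1 - ε) / 2) ^ n else 0)) := by
  have hl0 : (0:ℝ) ≤ (1 - ε) / 2 := by linarith
  refine Summable.of_nonneg_of_le (fun n => ?_) (fun n => ?_)
    (summable_geometric_of_lt_one hl0 (by linarith))
  · split
    · positivity
    · exact le_refl 0
  · split
    · exact le_refl _
    · positivity

private lemma mc_bounds {ε : ℝ} (hε0 : 0 < ε) (hε1 : ε < 1) {x : ℝ}
    (hx : x ∈ middleCantor ε) : 0 ≤ x ∧ x ≤ 1 := by
  obtain ⟨b, rfl⟩ := hx
  have hl0 : (0:ℝ) ≤ (1 - ε) / 2 := by linarith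
  have hs := mc_summable hε0 hε1 b
  have h1 : 0 < 1 - (1 - ε) / 2 := by linarith
  have hnn : 0 ≤ ∑' n : ℕ, (if b n then ((1 - ε) / 2) ^ n else 0) := by
    apply tsum_nonneg; intro n; split
    · positivity
    · exact le_refl 0
  have hub : (∑' n : ℕ, (if b n then ((1 - ε) / 2) ^ n else 0)) ≤
      ∑' n : ℕ, ((1 - ε) / 2) ^ n := by
    apply Summable.tsum_le_tsum _ hs (summable_geometric_of_lt_one hl0 (by linarith))
    intro n; split
    · exact le_refl _
    · positivity
  rw [tsum_geometric_of_lt_one hl0 (by linarith)] at hub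
  constructor
  · positivity
  · calc (1 - (1 - ε) / 2) * ∑' n : ℕ, (if b n then ((1 - ε) / 2) ^ n else 0)
        ≤ (1 - (1 - ε) / 2) * (1 - (1 - ε) / 2)⁻¹ := by
          apply mul_le_mul_of_nonneg_left hub h1.le
    _ = 1 := mul_inv_cancel₀ (ne_of_gt h1)

private lemma mc_split {ε : ℝ} (hε0 : 0 < ε) (hε1 : ε < 1) {x : ℝ}
    (hx : x ∈ middleCantor ε) :
    (∃ y ∈ middleCantor ε, x = (1 - ε) / 2 * y) ∨
    (∃ y ∈ middleCantor ε, x = (1 - (1 - ε) / 2) + (1 - ε) / 2 * y) := by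
  obtain ⟨b, rfl⟩ := hx
  have hs := mc_summable hε0 hε1 b
  set l := (1 - ε) / 2 with hl
  have h1 : (fun n : ℕ => if b (n + 1) then l ^ (n + 1) else 0) =
      fun n : ℕ => l * (if b (n + 1) then l ^ n else 0) := by
    funext n
    rw [mul_ite, mul_zero, pow_succ]
    split
    · ring
    · rfl
  have hshift : (∑' n : ℕ, (if b n then l ^ n else 0)) =
      (if b 0 then (1:ℝ) else 0) + l * ∑' n : ℕ, (if b (n + 1) then l ^ n else 0) := by
    rw [Summable.tsum_eq_zero_add hs, pow_zero, h1, tsum_mul_left]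
  set y := (1 - l) * ∑' n : ℕ, (if b (n + 1) then l ^ n else 0) with hydef
  have hymem : y ∈ middleCantor ε := ⟨fun n => b (n + 1), rfl⟩
  cases hb : b 0 with
  | false =>
    left
    refine ⟨y, hymem, ?_⟩
    rw [hshift, hb]
    simp only [Bool.false_eq_true, if_false, zero_add, hydef]
    ring
  | true =>
    right
    refine ⟨y, hymem, ?_⟩
    rw [hshift, hb]
    simp only [if_true, hydef]
    ring

private lemma mc_key {ε : ℝ} (hε0 : 0 < ε) (hε1 : ε < 1) :
    ∀ n : ℕ, ∀ a t : ℝ, ∀ k : ℕ, 0 < t → 2 ≤ k → ((1 - ε) / 2) ^ n < t →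
      (∀ i : ℕ, i < k → a + i * t ∈ middleCantor ε) → (k : ℝ) - 1 ≤ 1 / ε := by
  intro n
  induction n with
  | zero =>
    intro a t k ht hk hpow hAP
    exfalso
    have h0 := mc_bounds hε0 hε1 (hAP 0 (by omega))
    have h1 := mc_bounds hε0 hε1 (hAP 1 (by omega))
    simp only [Nat.cast_zero, Nat.cast_one, zero_mul, one_mul, add_zero] at h0 h1
    simp only [pow_zero] at hpow
    linarith [h0.1, h1.2]
  | succ n ih =>
    intro a t k ht hk hpow hAP
    set l := (1 - ε) / 2 with hl
    have hlpos : 0 < l := by rw [hl]; linarith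
    have hllt : l < 1 := by rw [hl]; linarith
    have hlt2 : l < 1 - l := by rw [hl]; linarith
    have hpow' : l ^ n < t / l := by
      rw [lt_div_iff₀ hlpos]
      calc l ^ n * l = l ^ (n + 1) := (pow_succ l n).symm
        _ < t := hpow
    by_cases hA : ∀ i : ℕ, i < k → a + i * t ≤ l
    · -- all in left copy
      apply ih (a / l) (t / l) k (by positivity) hk hpow'
      intro i hi
      rcases mc_split hε0 hε1 (hAP i hi) with ⟨y, hy, hxy⟩ | ⟨y, hy, hxy⟩ <;>
        rw [← hl] at hxy
      · have heq : a / l + i * (t / l) = y := by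
          field_simp
          linear_combination hxy
        rwa [heq]
      · exfalso
        have hyb := mc_bounds hε0 hε1 hy
        have hly : 0 ≤ l * y := mul_nonneg hlpos.le hyb.1
        have := hA i hi
        linarith
    · push_neg at hA
      obtain ⟨i0, hi0k, hi0⟩ := hA
      by_cases ha : l < a
      · -- all in right copy
        apply ih ((a - (1 - l)) / l) (t / l) k (by positivity) hk hpow'
        intro i hi
        rcases mc_split hε0 hε1 (hAP i hi) with ⟨y, hy, hxy⟩ | ⟨y, hy, hxy⟩ <;>
          rw [← hl] at hxy
        · exfalso
          have hyb := mc_bounds hε0 hε1 hy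
          have hly : l * y ≤ l := by
            calc l * y ≤ l * 1 := mul_le_mul_of_nonneg_left hyb.2 hlpos.le
              _ = l := mul_one l
          have hile : (0:ℝ) ≤ i * t := by positivity
          linarith
        · have heq : (a - (1 - l)) / l + i * (t / l) = y := by
            field_simp
            linear_combination hxy
          rwa [heq]
      · -- crossing case
        push_neg at ha
        classical
        have hex : ∃ i : ℕ, l < a + i * t := ⟨i0, hi0⟩
        set j := Nat.find hex with hj
        have hjspec : l < a + j * t := Nat.find_spec hex
        have hjle : j ≤ i0 := Nat.find_min' hex hi0
        have hjk : j < k := lt_of_le_of_lt hjle hi0k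
        have hj1 : 1 ≤ j := by
          by_contra h
          push_neg at h
          interval_cases j
          · simp only [Nat.cast_zero, zero_mul, add_zero] at hjspec; linarith
        have hprev : ¬ l < a + (↑(j - 1) : ℝ) * t := Nat.find_min hex (by omega)
        push_neg at hprev
        have hjr : 1 - l ≤ a + j * t := by
          rcases mc_split hε0 hε1 (hAP j hjk) with ⟨y, hy, hxy⟩ | ⟨y, hy, hxy⟩ <;>
            rw [← hl] at hxy
          · exfalso
            have hyb := mc_bounds hε0 hε1 hy
            have hly : l * y ≤ l := by
              calc l * y ≤ l * 1 := mul_le_mul_of_nonneg_left hyb.2 hlpos.le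
                _ = l := mul_one l
            linarith
          · have hyb := mc_bounds hε0 hε1 hy
            have hly : 0 ≤ l * y := mul_nonneg hlpos.le hyb.1
            linarith
        have hcast : (↑(j - 1) : ℝ) = (j : ℝ) - 1 := by
          push_cast [Nat.cast_sub hj1]; ring
        rw [hcast] at hprev
        have htge : ε ≤ t := by
          have h2 : (a + j * t) - (a + ((j:ℝ) - 1) * t) = t := by ring
          have h3 : (1 - l) - l ≤ t := by rw [← h2]; linarith
          rw [hl] at h3; linarith
        have h0 := mc_bounds hε0 hε1 (hAP 0 (by omega))
        have hk1 := mc_bounds hε0 hε1 (hAP (k - 1) (by omega))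
        have hcast2 : (↑(k - 1) : ℝ) = (k : ℝ) - 1 := by
          push_cast [Nat.cast_sub (by omega : 1 ≤ k)]; ring
        simp only [Nat.cast_zero, zero_mul, add_zero] at h0
        rw [hcast2] at hk1
        have hkt : ((k : ℝ) - 1) ≤ 1 / t := by
          rw [le_div_iff₀ ht]; linarith [h0.1, hk1.2]
        have : (1:ℝ) / t ≤ 1 / ε := one_div_le_one_div_of_le hε0 htge
        linarith

end aux

theorem stmt1 (ε : ℝ) (hε0 : 0 < ε) (hε1 : ε < 1)
    (a t : ℝ) (ht : 0 < t) (k : ℕ) (hk : 2 ≤ k)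
    (hAP : ∀ i : ℕ, i < k → a + i * t ∈ middleCantor ε) :
    (k : ℝ) - 1 ≤ 1 / ε := by
  obtain ⟨n, hn⟩ := exists_pow_lt_of_lt_one ht (by linarith : (1 - ε) / 2 < 1)
  exact mc_key hε0 hε1 n a t k ht hk hn hAP
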